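/- For any nonzero complex number z that is not an integer multiple of πi, the identity 1/sinh(z) = (1/z) · Π_{n=1}^∞ (πn)²/(z² + (πn)²) holds, where the infinite product converges. -/

import Mathlib

open Complex Real Filter

/-- Multipliability criterion: `1 + a n` with summable norms. -/
lemma aux_multipliable_one_add (a : ℕ → ℂ) (h0 : ∀ n, 1 + a n ≠ 0)
    (hs : Summable fun n => ‖a n‖) : Multipliable (fun n => 1 + a n) := by
  have hlog : Summable fun n => Complex.log (1 + a n) := by
    have htend : Tendsto (fun n => ‖a n‖) atTop (nhds 0) := hs.tendsto_atTop_zero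
    have hev : ∀ᶠ n in atTop, ‖Complex.log (1 + a n)‖ ≤ (3/2) * ‖a n‖ := by
      filter_upwards [htend.eventually_le_const (by norm_num : (0:ℝ) < 1/2)] with n hn
      exact Complex.norm_log_one_add_half_le_self hn
    exact Summable.of_norm_bounded_eventually_nat (hs.mul_left (3/2)) hev
  exact Complex.multipliable_of_summable_log hlog

theorem sinh_inv_product (z : ℂ) (hz : z ≠ 0)
    (hz' : ∀ n : ℤ, z ≠ (n : ℂ) * (π : ℂ) * I) :
    Multipliable (fun n : ℕ =>
      ((π : ℂ) * (n + 1)) ^ 2 / (z ^ 2 + ((π : ℂ) * (n + 1)) ^ 2)) ∧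
    1 / Complex.sinh z =
      (1 / z) * ∏' n : ℕ,
        ((π : ℂ) * (n + 1)) ^ 2 / (z ^ 2 + ((π : ℂ) * (n + 1)) ^ 2) := by
  have hπ : ((π : ℂ)) ≠ 0 := by exact_mod_cast Real.pi_ne_zero
  -- denominators are nonzero
  have hden : ∀ n : ℕ, z ^ 2 + ((π : ℂ) * (n + 1)) ^ 2 ≠ 0 := by
    intro n h
    have hfac : (z - (π : ℂ) * (n + 1) * I) * (z + (π : ℂ) * (n + 1) * I) = 0 := by
      have hI : I ^ 2 = -1 := I_sq
      linear_combination h - ((π : ℂ) * (n + 1)) ^ 2 * hI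
    rcases mul_eq_zero.mp hfac with h1 | h1
    · exact hz' ((n : ℤ) + 1) (by push_cast; linear_combination h1)
    · exact hz' (-((n : ℤ) + 1)) (by push_cast; linear_combination h1)
  have hA : ∀ n : ℕ, ((π : ℂ) * (n + 1)) ^ 2 ≠ 0 := by
    intro n
    apply pow_ne_zero
    exact mul_ne_zero hπ (Nat.cast_add_one_ne_zero n)
  set f : ℕ → ℂ := fun n => ((π : ℂ) * (n + 1)) ^ 2 / (z ^ 2 + ((π : ℂ) * (n + 1)) ^ 2) with hf
  set g : ℕ → ℂ := fun n => 1 + z ^ 2 / ((π : ℂ) * (n + 1)) ^ 2 with hg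
  -- norm of the A n grows like (n+1)^2
  have hnormA : ∀ n : ℕ, ((n : ℝ) + 1) ^ 2 ≤ ‖((π : ℂ) * (n + 1)) ^ 2‖ := by
    intro n
    rw [norm_pow, norm_mul]
    have h1 : ‖((π : ℂ))‖ = π := by
      simp [Complex.norm_real, abs_of_pos Real.pi_pos]
    have h2 : ‖((n : ℂ) + 1)‖ = (n : ℝ) + 1 := by
      rw [show ((n : ℂ) + 1) = ((n + 1 : ℕ) : ℂ) by push_cast; ring]
      rw [Complex.norm_natCast]; push_cast; ring
    rw [h1, h2]
    have hp1 : (1 : ℝ) ≤ π := by linarith [Real.pi_gt_three]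
    have hn1 : (0 : ℝ) ≤ (n : ℝ) + 1 := by positivity
    have hm : (n : ℝ) + 1 ≤ π * ((n : ℝ) + 1) := by nlinarith
    nlinarith [sq_nonneg ((n:ℝ)+1)]
  have hApos : ∀ n : ℕ, (0 : ℝ) < ‖((π : ℂ) * (n + 1)) ^ 2‖ := fun n =>
    lt_of_lt_of_le (by positivity) (hnormA n)
  -- summability of 1/(n+1)^2
  have hsum2 : Summable (fun n : ℕ => (1 : ℝ) / ((n : ℝ) + 1) ^ 2) := by
    have := (summable_nat_add_iff (f := fun n : ℕ => (1 : ℝ) / (n : ℝ) ^ 2) 1).mpr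
      (Real.summable_one_div_nat_pow.mpr one_lt_two)
    simpa using this
  -- Multipliable g
  have hgalt : ∀ n : ℕ, g n
      = (z ^ 2 + ((π : ℂ) * (n + 1)) ^ 2) / ((π : ℂ) * (n + 1)) ^ 2 := by
    intro n
    simp only [hg]
    rw [add_div, div_self (hA n)]
    ring
  have hgne : ∀ n, g n ≠ 0 := by
    intro n
    rw [hgalt n]
    exact div_ne_zero (hden n) (hA n)
  have hMg : Multipliable g := by
    apply aux_multipliable_one_add _ hgne
    apply Summable.of_nonneg_of_le (fun n => norm_nonneg _) ?_
      (hsum2.mul_left (‖z‖ ^ 2))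
    intro n
    rw [norm_div, norm_pow]
    calc ‖z‖ ^ 2 / ‖((π : ℂ) * (n + 1)) ^ 2‖
        ≤ ‖z‖ ^ 2 / ((n : ℝ) + 1) ^ 2 :=
          div_le_div_of_nonneg_left (by positivity) (by positivity) (hnormA n)
      _ = ‖z‖ ^ 2 * (1 / ((n : ℝ) + 1) ^ 2) := by ring
  -- f n * g n = 1
  have hfg : ∀ n, f n * g n = 1 := by
    intro n
    rw [hgalt n]
    simp only [hf]
    rw [div_mul_div_comm, mul_comm]
    exact div_self (mul_ne_zero (hden n) (hA n))
  have hfne : ∀ n, f n ≠ 0 := fun n => div_ne_zero (hA n) (hden n)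
  -- Multipliable f
  have hMf : Multipliable f := by
    have hfeq : f = fun n : ℕ => 1 + (-z ^ 2 / (z ^ 2 + ((π : ℂ) * (n + 1)) ^ 2)) := by
      funext n
      simp only [hf]
      rw [show (1:ℂ) + -z ^ 2 / (z ^ 2 + ((π : ℂ) * (n + 1)) ^ 2)
          = ((z ^ 2 + ((π : ℂ) * (n + 1)) ^ 2) - z ^ 2) / (z ^ 2 + ((π : ℂ) * (n + 1)) ^ 2) by
        rw [sub_div, div_self (hden n)]; ring]
      congr 1
      ring
    rw [hfeq]
    apply aux_multipliable_one_add
    · intro n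
      rw [← congrFun hfeq n]
      exact hfne n
    · -- eventual bound : ‖z²+A n‖ ≥ (n+1)²/2 for n ≥ 2‖z‖²
      apply Summable.of_norm_bounded_eventually_nat
        (g := fun n => 2 * ‖z‖ ^ 2 * (1 / ((n : ℝ) + 1) ^ 2)) (hsum2.mul_left _)
      filter_upwards [eventually_ge_atTop (⌈2 * ‖z‖ ^ 2⌉₊)] with n hn
      have hb : 2 * ‖z‖ ^ 2 ≤ ((n : ℝ) + 1) ^ 2 := by
        have h1 : 2 * ‖z‖ ^ 2 ≤ (⌈2 * ‖z‖ ^ 2⌉₊ : ℝ) := Nat.le_ceil _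
        have h2 : ((⌈2 * ‖z‖ ^ 2⌉₊ : ℕ) : ℝ) ≤ (n : ℝ) := by exact_mod_cast hn
        nlinarith [Nat.cast_nonneg (α := ℝ) n]
      have hlow : ((n : ℝ) + 1) ^ 2 / 2 ≤ ‖z ^ 2 + ((π : ℂ) * (n + 1)) ^ 2‖ := by
        have h3 : ‖((π : ℂ) * (n + 1)) ^ 2‖ - ‖z ^ 2‖ ≤ ‖z ^ 2 + ((π : ℂ) * (n + 1)) ^ 2‖ := by
          have := norm_sub_norm_le (((π : ℂ) * (n + 1)) ^ 2) (-(z ^ 2))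
          simpa [add_comm, sub_neg_eq_add] using this
        have h4 : ‖z ^ 2‖ = ‖z‖ ^ 2 := norm_pow z 2
        nlinarith [hnormA n]
      have hpos : (0 : ℝ) < ‖z ^ 2 + ((π : ℂ) * (n + 1)) ^ 2‖ :=
        norm_pos_iff.mpr (hden n)
      rw [norm_norm, norm_div, norm_neg, norm_pow, div_le_iff₀ hpos]
      have hne : ((n : ℝ) + 1) ^ 2 ≠ 0 := by positivity
      calc ‖z‖ ^ 2 = 2 * ‖z‖ ^ 2 * (1 / ((n : ℝ) + 1) ^ 2) * (((n : ℝ) + 1) ^ 2 / 2) := by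
            field_simp
        _ ≤ 2 * ‖z‖ ^ 2 * (1 / ((n : ℝ) + 1) ^ 2) * ‖z ^ 2 + ((π : ℂ) * (n + 1)) ^ 2‖ := by
            apply mul_le_mul_of_nonneg_left hlow (by positivity)
  -- sinh z ≠ 0
  have hsinh : Complex.sinh z ≠ 0 := by
    intro h
    have hsin : Complex.sin (z * I) = 0 := by rw [Complex.sin_mul_I, h, zero_mul]
    obtain ⟨k, hk⟩ := Complex.sin_eq_zero_iff.mp hsin
    apply hz' (-k)
    have hI : I ≠ 0 := I_ne_zero
    have hI2 : I ^ 2 = -1 := I_sq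
    push_cast
    linear_combination (-I) * hk + z * hI2
  -- the Euler product limit for g
  have heuler : Tendsto (fun n : ℕ => ∏ j ∈ Finset.range n, g j) atTop
      (nhds (Complex.sinh z / z)) := by
    have h0 := Complex.tendsto_euler_sin_prod (-I * z / (π : ℂ))
    have hz0 : (π : ℂ) * (-I * z / (π : ℂ)) = -I * z := by
      rw [mul_comm, div_mul_cancel₀ _ hπ]
    have hprod : ∀ n : ℕ, (π : ℂ) * (-I * z / (π : ℂ)) *
        ∏ j ∈ Finset.range n, (1 - (-I * z / (π : ℂ)) ^ 2 / ((j : ℂ) + 1) ^ 2)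
        = -I * z * ∏ j ∈ Finset.range n, g j := by
      intro n
      rw [hz0]
      congr 1
      apply Finset.prod_congr rfl
      intro j _
      simp only [hg]
      have hj : ((π : ℂ) * (j + 1)) ^ 2 ≠ 0 := hA j
      have hj1 : ((j : ℂ) + 1) ≠ 0 := Nat.cast_add_one_ne_zero j
      rw [show (-I * z / (π : ℂ)) ^ 2 = -z ^ 2 / (π : ℂ) ^ 2 by
        rw [div_pow, mul_pow, neg_sq, I_sq]; ring]
      field_simp
      ring
    have h1 := (h0.congr hprod).const_mul ((-I * z)⁻¹)
    have hIz : -I * z ≠ 0 := mul_ne_zero (neg_ne_zero.mpr I_ne_zero) hz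
    have heq : (fun n : ℕ => (-I * z)⁻¹ * (-I * z * ∏ j ∈ Finset.range n, g j))
        = fun n : ℕ => ∏ j ∈ Finset.range n, g j := by
      funext n
      rw [← mul_assoc, inv_mul_cancel₀ hIz, one_mul]
    rw [heq] at h1
    convert h1 using 2
    have hval : Complex.sin ((π : ℂ) * (-I * z / (π : ℂ))) = -(Complex.sinh z * I) := by
      rw [hz0, show (-I * z) = -(z * I) by ring, Complex.sin_neg, Complex.sin_mul_I]
    rw [hval, neg_mul, inv_neg, neg_mul_neg, inv_mul_eq_div,
      mul_comm (Complex.sinh z) I, mul_div_mul_left _ _ I_ne_zero]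
  -- identify the tprod of g
  have hgval : ∏' n, g n = Complex.sinh z / z :=
    tendsto_nhds_unique hMg.hasProd.tendsto_prod_nat heuler
  have hprod1 : (∏' n, f n) * (∏' n, g n) = 1 := by
    rw [← hMf.tprod_mul hMg]
    calc ∏' n, (f n * g n) = ∏' _ : ℕ, (1 : ℂ) := tprod_congr hfg
      _ = 1 := tprod_one
  refine ⟨hMf, ?_⟩
  have hfval : ∏' n, f n = z / Complex.sinh z := by
    rw [hgval] at hprod1
    field_simp at hprod1 ⊢
    linear_combination hprod1
  rw [hfval]
  field_simp
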